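/- arXiv:0805.3354 — 2 statements merged into one kernel-verified Lean document; each statement's English description precedes it below -/
import Mathlib

section
/- Let γ > 0 and let g be the multiplicative function on positive integers defined by g(n) = |μ(n)| γ^ω(n) / n, where μ is the Möbius function and ω(n) is the number of distinct prime factors of n. Then the sum of g(n) over n ≤ z is ≫ (log z)^γ as z → ∞. -/
open Finset Real

lemma sqfree_prod_primes {S : Finset ℕ} (hS : ∀ p ∈ S, p.Prime) :
    Squarefree (∏ p ∈ S, p) := by
  induction S using Finset.cons_induction with
  | empty => simp
  | cons a s ha ih =>
    rw [Finset.prod_cons]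
    have hcop : Nat.Coprime a (∏ p ∈ s, p) :=
      Nat.Coprime.prod_right fun q hq =>
        (Nat.coprime_primes (hS a (Finset.mem_cons_self ..))
          (hS q (Finset.mem_cons_of_mem hq))).mpr (by rintro rfl; exact ha hq)
    exact (Nat.squarefree_mul hcop).mpr
      ⟨(hS a (Finset.mem_cons_self ..)).prime.squarefree,
        ih fun p hp => hS p (Finset.mem_cons_of_mem hp)⟩

lemma prod_pow_div_dvd_factorial (N : ℕ) :
    (∏ p ∈ Nat.primesBelow (N+1), p ^ (N / p)) ∣ Nat.factorial N := by
  have h0 : ∀ p ∈ Nat.primesBelow (N+1), p ^ (N / p) ≠ 0 :=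
    fun p hp => pow_ne_zero _ (Nat.prime_of_mem_primesBelow hp).ne_zero
  rw [← Nat.factorization_le_iff_dvd (Finset.prod_ne_zero_iff.mpr h0) (Nat.factorial_ne_zero N)]
  rw [Nat.factorization_prod h0]
  intro q
  rw [Finsupp.finset_sum_apply]
  have : ∀ p ∈ Nat.primesBelow (N+1), (p ^ (N / p)).factorization q
      = if p = q then N / p else 0 := by
    intro p hp
    rw [Nat.Prime.factorization_pow (Nat.prime_of_mem_primesBelow hp), Finsupp.single_apply]
  rw [Finset.sum_congr rfl this, Finset.sum_ite_eq']
  split_ifs with hq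
  · -- q prime, q ≤ N
    have hqp := Nat.prime_of_mem_primesBelow hq
    have hqN : q ≤ N := Nat.lt_succ_iff.mp (Nat.lt_of_mem_primesBelow hq)
    have hdvd : q ^ (N / q) ∣ Nat.factorial N := by
      rw [Nat.Prime.pow_dvd_factorial_iff hqp (Nat.lt_succ_self _)]
      have h1 : 1 ∈ Finset.Ico 1 (Nat.log q N + 1) := by
        simp [Nat.succ_le_iff, Nat.log_pos hqp.one_lt hqN]
      calc N / q = N / q ^ 1 := by rw [pow_one]
        _ ≤ ∑ i ∈ Finset.Ico 1 (Nat.log q N + 1), N / q ^ i :=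
          Finset.single_le_sum (f := fun i => N / q ^ i) (fun _ _ => Nat.zero_le _) h1
    exact (Nat.Prime.pow_dvd_iff_le_factorization hqp (Nat.factorial_ne_zero N)).mp hdvd
  · exact Nat.zero_le _

lemma log_prod_pow_le (N : ℕ) (hN : 1 ≤ N) :
    ∑ p ∈ Nat.primesBelow (N+1), ((N / p : ℕ) : ℝ) * Real.log p ≤ N * Real.log N := by
  have hd := prod_pow_div_dvd_factorial N
  have hdle : (∏ p ∈ Nat.primesBelow (N+1), p ^ (N / p)) ≤ Nat.factorial N :=
    Nat.le_of_dvd (Nat.factorial_pos N) hd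
  have h1 : Real.log (∏ p ∈ Nat.primesBelow (N+1), p ^ (N / p) : ℕ)
      = ∑ p ∈ Nat.primesBelow (N+1), ((N / p : ℕ) : ℝ) * Real.log p := by
    push_cast
    rw [Real.log_prod]
    · exact Finset.sum_congr rfl fun p hp => by
        rw [Real.log_pow]
    · intro p hp
      exact pow_ne_zero _ (by exact_mod_cast (Nat.prime_of_mem_primesBelow hp).ne_zero)
  rw [← h1]
  calc Real.log (∏ p ∈ Nat.primesBelow (N+1), p ^ (N / p) : ℕ)
      ≤ Real.log (Nat.factorial N) := Real.log_le_log
        (by exact_mod_cast Finset.prod_pos fun p hp => pow_pos (Nat.prime_of_mem_primesBelow hp).pos _)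
        (by exact_mod_cast hdle)
    _ ≤ Real.log ((N : ℕ) ^ N) := Real.log_le_log (by positivity)
        (by exact_mod_cast Nat.factorial_le_pow N)
    _ = N * Real.log N := by push_cast; rw [Real.log_pow]

lemma log_primorial_le (N : ℕ) :
    ∑ p ∈ Nat.primesBelow (N+1), Real.log p ≤ N * Real.log 4 := by
  have h1 : Real.log (primorial N) = ∑ p ∈ Nat.primesBelow (N+1), Real.log p := by
    rw [primorial, Nat.primesBelow]
    push_cast
    rw [Real.log_prod]
    intro p hp
    simp only [Finset.mem_filter] at hp
    exact_mod_cast hp.2.ne_zero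
  rw [← h1]
  calc Real.log (primorial N) ≤ Real.log ((4:ℕ) ^ N) :=
        Real.log_le_log (by exact_mod_cast primorial_pos N) (by exact_mod_cast primorial_le_4_pow N)
    _ = N * Real.log 4 := by push_cast; rw [Real.log_pow]

lemma mertens1 (N : ℕ) (hN : 1 ≤ N) :
    ∑ p ∈ Nat.primesBelow (N+1), Real.log p / p ≤ Real.log N + Real.log 4 := by
  have hNpos : (0:ℝ) < N := by exact_mod_cast hN
  have key : ∀ p ∈ Nat.primesBelow (N+1),
      Real.log p / p ≤ (((N / p : ℕ) : ℝ) * Real.log p + Real.log p) / N := by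
    intro p hp
    have hpp := Nat.prime_of_mem_primesBelow hp
    have hppos : (0:ℝ) < p := by exact_mod_cast hpp.pos
    have hlp : (0:ℝ) ≤ Real.log p := Real.log_natCast_nonneg p
    have hNlt : (N:ℝ) < (((N / p : ℕ) : ℝ) + 1) * p := by
      have h := Nat.div_add_mod N p
      have h2 : N % p < p := Nat.mod_lt _ hpp.pos
      have h3 : (N / p + 1) * p = p * (N / p) + p := by ring
      have : N < (N / p + 1) * p := by omega
      exact_mod_cast this
    rw [div_le_div_iff₀ hppos hNpos]
    calc Real.log p * N ≤ Real.log p * ((((N / p : ℕ) : ℝ) + 1) * p) := by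
          apply mul_le_mul_of_nonneg_left (le_of_lt hNlt) hlp
      _ = (((N / p : ℕ) : ℝ) * Real.log p + Real.log p) * p := by ring
  calc ∑ p ∈ Nat.primesBelow (N+1), Real.log p / p
      ≤ ∑ p ∈ Nat.primesBelow (N+1), (((N / p : ℕ) : ℝ) * Real.log p + Real.log p) / N :=
        Finset.sum_le_sum key
    _ = (∑ p ∈ Nat.primesBelow (N+1), (((N / p : ℕ) : ℝ) * Real.log p + Real.log p)) / N := by
        rw [Finset.sum_div]
    _ ≤ (N * Real.log N + N * Real.log 4) / N := by
        rw [Finset.sum_add_distrib]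
        exact div_le_div_of_nonneg_right
          (add_le_add (log_prod_pow_le N hN) (log_primorial_le N)) hNpos.le
    _ = Real.log N + Real.log 4 := by field_simp

lemma sum_inv_sq_primesBelow (M : ℕ) :
    ∑ p ∈ Nat.primesBelow M, ((p:ℝ)⁻¹)^2 ≤ 1 := by
  have h1 : ∑ p ∈ Nat.primesBelow M, ((p:ℝ)⁻¹)^2
      ≤ ∑ m ∈ Finset.Ico 2 M, ((m:ℝ)⁻¹)^2 := by
    apply Finset.sum_le_sum_of_subset_of_nonneg
    · intro p hp
      exact Finset.mem_Ico.mpr ⟨(Nat.prime_of_mem_primesBelow hp).two_le,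
        Nat.lt_of_mem_primesBelow hp⟩
    · intro m _ _; positivity
  have h2 : ∑ m ∈ Finset.Ico 2 M, ((m:ℝ)⁻¹)^2
      ≤ ∑ m ∈ Finset.Ico 2 M, (((m:ℝ) - 1)⁻¹ - (m:ℝ)⁻¹) := by
    apply Finset.sum_le_sum
    intro m hm
    have hm2 : 2 ≤ m := (Finset.mem_Ico.mp hm).1
    have hm2R : (2:ℝ) ≤ m := by exact_mod_cast hm2
    have h0 : (0:ℝ) < m := by linarith
    have h1' : (0:ℝ) < (m:ℝ) - 1 := by linarith
    have key : ((m:ℝ)-1)⁻¹ - (m:ℝ)⁻¹ = (((m:ℝ)-1)*m)⁻¹ := by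
      field_simp; ring
    rw [key, pow_two, ← mul_inv]
    gcongr
    · nlinarith
  have h3 : ∑ m ∈ Finset.Ico 2 M, (((m:ℝ) - 1)⁻¹ - (m:ℝ)⁻¹) ≤ 1 := by
    rw [Finset.sum_Ico_eq_sum_range]
    have he : ∀ i ∈ Finset.range (M - 2),
        (((2 + i : ℕ) : ℝ) - 1)⁻¹ - ((2 + i : ℕ) : ℝ)⁻¹
          = (fun j : ℕ => ((j:ℝ) + 1)⁻¹) i - (fun j : ℕ => ((j:ℝ) + 1)⁻¹) (i + 1) := by
      intro i _
      push_cast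
      ring_nf
    rw [Finset.sum_congr rfl he,
      Finset.sum_range_sub' (f := fun j : ℕ => ((j:ℝ)+1)⁻¹)]
    have h4 : (0:ℝ) ≤ (((M - 2 : ℕ):ℝ) + 1)⁻¹ := by positivity
    simp only [Nat.cast_zero, zero_add, inv_one]
    linarith
  linarith

lemma neg_log_one_sub_le {x : ℝ} (h0 : 0 < x) (h2 : x ≤ 1/2) :
    -Real.log (1-x) ≤ x + 2*x^2 := by
  have h1 : 0 < 1 - x := by linarith
  have hlog : Real.log ((1-x)⁻¹) ≤ (1-x)⁻¹ - 1 :=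
    Real.log_le_sub_one_of_pos (by positivity)
  rw [Real.log_inv] at hlog
  have hinvpos : (0:ℝ) ≤ (1-x)⁻¹ := by positivity
  have hmul : 1 ≤ (1 + x + 2*x^2) * (1 - x) := by nlinarith
  have hinv : (1-x)⁻¹ ≤ 1 + x + 2*x^2 := by
    calc (1-x)⁻¹ = 1 * (1-x)⁻¹ := (one_mul _).symm
      _ ≤ ((1 + x + 2*x^2) * (1 - x)) * (1-x)⁻¹ := by
          exact mul_le_mul_of_nonneg_right hmul hinvpos
      _ = 1 + x + 2*x^2 := by field_simp
  linarith

noncomputable def invHom : ℕ →* ℝ where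
  toFun n := (n:ℝ)⁻¹
  map_one' := by simp
  map_mul' m n := by push_cast; rw [mul_inv]

lemma harmonic_le_euler_prod (N : ℕ) :
    ∑ m ∈ Finset.Icc 1 N, (m:ℝ)⁻¹ ≤ ∏ p ∈ Nat.primesBelow (N+1), (1 - (p:ℝ)⁻¹)⁻¹ := by
  classical
  have hnorm : ∀ {p : ℕ}, p.Prime → ‖invHom p‖ < 1 := by
    intro p hp
    have h2 : (2:ℝ) ≤ p := by exact_mod_cast hp.two_le
    simp only [invHom, MonoidHom.coe_mk, OneHom.coe_mk, Real.norm_eq_abs]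
    rw [abs_of_nonneg (by positivity)]
    rw [inv_lt_one_iff₀]
    right; linarith
  obtain ⟨-, hassum⟩ :=
    EulerProduct.summable_and_hasSum_smoothNumbers_prod_primesBelow_geometric
      (f := invHom) hnorm (N+1)
  have hmem : ∀ m ∈ Finset.Icc 1 N, m ∈ (N+1).smoothNumbers := by
    intro m hm
    rw [Finset.mem_Icc] at hm
    rw [Nat.mem_smoothNumbers]
    refine ⟨by omega, fun p hp => ?_⟩
    have hdvd := Nat.dvd_of_mem_primeFactorsList hp
    have := Nat.le_of_dvd (by omega) hdvd
    omega
  have heq : ∑ x ∈ (Finset.Icc 1 N).subtype (· ∈ (N+1).smoothNumbers),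
      invHom ((x : ℕ)) = ∑ m ∈ Finset.Icc 1 N, (m:ℝ)⁻¹ := by
    rw [Finset.sum_subtype_eq_sum_filter]
    rw [Finset.filter_true_of_mem hmem]
    rfl
  have hle := sum_le_hasSum ((Finset.Icc 1 N).subtype (· ∈ (N+1).smoothNumbers))
    (fun i _ => by
      simp only [invHom, MonoidHom.coe_mk, OneHom.coe_mk]
      positivity) hassum
  rw [heq] at hle
  refine hle.trans (le_of_eq (Finset.prod_congr rfl fun p hp => ?_))
  simp [invHom]

lemma mertens2 (N : ℕ) (hN : 2 ≤ N) :
    Real.log (Real.log (N+1)) - 2 ≤ ∑ p ∈ Nat.primesBelow (N+1), (p:ℝ)⁻¹ := by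
  have hfacpos : ∀ p ∈ Nat.primesBelow (N+1), (0:ℝ) < (1 - (p:ℝ)⁻¹)⁻¹ := by
    intro p hp
    have h2 : (2:ℝ) ≤ p := by exact_mod_cast (Nat.prime_of_mem_primesBelow hp).two_le
    have h4 : (p:ℝ)⁻¹ ≤ 1/2 := by
      rw [inv_le_comm₀ (by linarith) (by norm_num)]
      linarith
    have h3 : (0:ℝ) < 1 - (p:ℝ)⁻¹ := by linarith
    positivity
  have hH : Real.log (N+1) ≤ ∑ m ∈ Finset.Icc 1 N, (m:ℝ)⁻¹ := by
    have h := log_add_one_le_harmonic N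
    rw [harmonic_eq_sum_Icc] at h
    push_cast at h ⊢
    exact h
  have hP := harmonic_le_euler_prod N
  have hlogN1 : (0:ℝ) < Real.log (N+1) := by
    apply Real.log_pos
    have : (2:ℝ) ≤ N := by exact_mod_cast hN
    linarith
  have hchain : Real.log (Real.log (N+1))
      ≤ Real.log (∏ p ∈ Nat.primesBelow (N+1), (1 - (p:ℝ)⁻¹)⁻¹) :=
    Real.log_le_log hlogN1 (le_trans hH hP)
  have hlogprod : Real.log (∏ p ∈ Nat.primesBelow (N+1), (1 - (p:ℝ)⁻¹)⁻¹)
      = ∑ p ∈ Nat.primesBelow (N+1), -Real.log (1 - (p:ℝ)⁻¹) := by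
    rw [Real.log_prod (fun p hp => (hfacpos p hp).ne')]
    exact Finset.sum_congr rfl fun p hp => Real.log_inv _
  have hterm : ∀ p ∈ Nat.primesBelow (N+1),
      -Real.log (1 - (p:ℝ)⁻¹) ≤ (p:ℝ)⁻¹ + 2*((p:ℝ)⁻¹)^2 := by
    intro p hp
    have hpp := Nat.prime_of_mem_primesBelow hp
    have h2 : (2:ℝ) ≤ p := by exact_mod_cast hpp.two_le
    apply neg_log_one_sub_le (by positivity)
    rw [inv_le_comm₀ (by linarith) (by norm_num)]
    linarith
  calc Real.log (Real.log (N+1)) - 2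
      ≤ (∑ p ∈ Nat.primesBelow (N+1), ((p:ℝ)⁻¹ + 2*((p:ℝ)⁻¹)^2)) - 2 := by
        have := hchain.trans_eq hlogprod
        linarith [Finset.sum_le_sum hterm, this]
    _ = (∑ p ∈ Nat.primesBelow (N+1), (p:ℝ)⁻¹)
        + 2 * (∑ p ∈ Nat.primesBelow (N+1), ((p:ℝ)⁻¹)^2) - 2 := by
        rw [Finset.sum_add_distrib, Finset.mul_sum]
    _ ≤ ∑ p ∈ Nat.primesBelow (N+1), (p:ℝ)⁻¹ := by
        linarith [sum_inv_sq_primesBelow (N+1)]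

lemma prod_div_eq (γ : ℝ) {P S : Finset ℕ} (hSP : S ⊆ P) (hP : ∀ p ∈ P, p.Prime) :
    ∏ p ∈ S, (γ / (p:ℝ)) = γ ^ S.card / ((∏ p ∈ S, p : ℕ) : ℝ) := by
  rw [Finset.prod_div_distrib, Finset.prod_const]
  push_cast
  rfl

lemma euler_id (γ : ℝ) (P : Finset ℕ) :
    ∑ S ∈ P.powerset, ∏ p ∈ S, (γ / (p:ℝ)) = ∏ p ∈ P, (1 + γ / (p:ℝ)) := by
  have h := Finset.prod_add (fun p : ℕ => γ / (p:ℝ)) (fun _ => (1:ℝ)) P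
  simp only [Finset.prod_const_one, mul_one] at h
  rw [← h]
  exact Finset.prod_congr rfl fun p _ => by ring

lemma w_nonneg {γ : ℝ} (hγ : 0 < γ) (S : Finset ℕ) :
    0 ≤ ∏ p ∈ S, (γ / (p:ℝ)) :=
  Finset.prod_nonneg fun p _ => by positivity

lemma tail_bound (γ : ℝ) (hγ : 0 < γ) (P : Finset ℕ) (hP : ∀ p ∈ P, p.Prime)
    (z : ℝ) (hz1 : 1 ≤ z) (hlz : 0 < Real.log z) :
    (∑ S ∈ P.powerset.filter (fun S => ¬ (∏ p ∈ S, p) ≤ ⌊z⌋₊),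
        ∏ p ∈ S, (γ / (p:ℝ))) * Real.log z
      ≤ (∑ q ∈ P, γ * Real.log q / q) * ∏ p ∈ P, (1 + γ / (p:ℝ)) := by
  classical
  have primes_of_mem : ∀ {S : Finset ℕ}, S ∈ P.powerset → ∀ p ∈ S, p.Prime :=
    fun hS p hp => hP p (Finset.mem_powerset.mp hS hp)
  have hprod1 : ∀ S ∈ P.powerset, (1:ℝ) ≤ ((∏ p ∈ S, p : ℕ) : ℝ) := by
    intro S hS
    have : 1 ≤ ∏ p ∈ S, p :=
      Finset.one_le_prod' fun p hp => (primes_of_mem hS p hp).one_lt.le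
    exact_mod_cast this
  have hlognn : ∀ S ∈ P.powerset, 0 ≤ Real.log (((∏ p ∈ S, p : ℕ) : ℝ)) :=
    fun S hS => Real.log_nonneg (hprod1 S hS)
  have step1 : (∑ S ∈ P.powerset.filter (fun S => ¬ (∏ p ∈ S, p) ≤ ⌊z⌋₊),
        ∏ p ∈ S, (γ / (p:ℝ))) * Real.log z
      ≤ ∑ S ∈ P.powerset,
          (∏ p ∈ S, (γ / (p:ℝ))) * Real.log (((∏ p ∈ S, p : ℕ) : ℝ)) := by
    rw [Finset.sum_mul]
    refine le_trans (Finset.sum_le_sum ?_)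
      (Finset.sum_le_sum_of_subset_of_nonneg (Finset.filter_subset _ _) ?_)
    · intro S hS
      have hSp := Finset.mem_of_mem_filter S hS
      have hlog : Real.log z ≤ Real.log (((∏ p ∈ S, p : ℕ) : ℝ)) := by
        rw [Finset.mem_filter] at hS
        have hzlt : z < ((∏ p ∈ S, p : ℕ) : ℝ) := by
          exact_mod_cast (Nat.floor_lt (by linarith : (0:ℝ) ≤ z)).mp
            (Nat.lt_of_not_le hS.2)
        exact Real.log_le_log (by linarith) hzlt.le
      exact mul_le_mul_of_nonneg_left hlog (w_nonneg hγ S)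
    · intro S hS _
      exact mul_nonneg (w_nonneg hγ S) (hlognn S hS)
  have step2 : ∑ S ∈ P.powerset,
      (∏ p ∈ S, (γ / (p:ℝ))) * Real.log (((∏ p ∈ S, p : ℕ) : ℝ))
      = ∑ q ∈ P, ∑ S ∈ P.powerset,
          (if q ∈ S then (∏ p ∈ S, (γ / (p:ℝ))) * Real.log q else 0) := by
    rw [Finset.sum_comm]
    refine Finset.sum_congr rfl fun S hS => ?_
    have hcast : ((∏ p ∈ S, p : ℕ) : ℝ) = ∏ p ∈ S, (p:ℝ) := by push_cast; rfl
    rw [hcast, Real.log_prod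
      (fun p hp => by exact_mod_cast (primes_of_mem hS p hp).ne_zero)]
    rw [Finset.mul_sum]
    rw [Finset.sum_ite_mem]
    rw [Finset.inter_comm, (Finset.inter_eq_left.mpr (Finset.mem_powerset.mp hS))]
  have inner_bound : ∀ q ∈ P, ∑ S ∈ P.powerset,
      (if q ∈ S then (∏ p ∈ S, (γ / (p:ℝ))) * Real.log q else 0)
      ≤ γ * Real.log q / q * ∏ p ∈ P, (1 + γ / (p:ℝ)) := by
    intro q hq
    have hqe : q ∉ P.erase q := Finset.notMem_erase q P
    have heq1 : ∑ S ∈ P.powerset,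
        (if q ∈ S then (∏ p ∈ S, (γ / (p:ℝ))) * Real.log q else 0)
        = γ / q * Real.log q * ∑ t ∈ (P.erase q).powerset, ∏ p ∈ t, (γ / (p:ℝ)) := by
      conv_lhs => rw [← Finset.insert_erase hq]
      rw [Finset.sum_powerset_insert hqe]
      have h1 : ∀ t ∈ (P.erase q).powerset,
          (if q ∈ t then (∏ p ∈ t, (γ / (p:ℝ))) * Real.log q else 0) = 0 := by
        intro t ht
        rw [if_neg (fun hqt => hqe (Finset.mem_powerset.mp ht hqt))]
      have h2 : ∀ t ∈ (P.erase q).powerset,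
          (if q ∈ insert q t then (∏ p ∈ insert q t, (γ / (p:ℝ))) * Real.log q else 0)
          = γ / q * Real.log q * ∏ p ∈ t, (γ / (p:ℝ)) := by
        intro t ht
        rw [if_pos (Finset.mem_insert_self q t),
          Finset.prod_insert (fun hqt => hqe (Finset.mem_powerset.mp ht hqt))]
        ring
      rw [Finset.sum_congr rfl h1, Finset.sum_congr rfl h2, Finset.sum_const_zero,
        zero_add, ← Finset.mul_sum]
    rw [heq1]
    have hlogq : (0:ℝ) ≤ Real.log q := Real.log_natCast_nonneg q
    have hc : (0:ℝ) ≤ γ / q * Real.log q := by positivity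
    calc γ / q * Real.log q * ∑ t ∈ (P.erase q).powerset, ∏ p ∈ t, (γ / (p:ℝ))
        ≤ γ / q * Real.log q * ∑ t ∈ P.powerset, ∏ p ∈ t, (γ / (p:ℝ)) := by
          apply mul_le_mul_of_nonneg_left ?_ hc
          exact Finset.sum_le_sum_of_subset_of_nonneg
            (Finset.powerset_mono.mpr (Finset.erase_subset q P))
            (fun t _ _ => w_nonneg hγ t)
      _ = γ * Real.log q / q * ∏ p ∈ P, (1 + γ / (p:ℝ)) := by
          rw [euler_id γ P]; ring
  calc (∑ S ∈ P.powerset.filter (fun S => ¬ (∏ p ∈ S, p) ≤ ⌊z⌋₊),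
        ∏ p ∈ S, (γ / (p:ℝ))) * Real.log z
      ≤ ∑ q ∈ P, ∑ S ∈ P.powerset,
          (if q ∈ S then (∏ p ∈ S, (γ / (p:ℝ))) * Real.log q else 0) :=
        step1.trans_eq step2
    _ ≤ ∑ q ∈ P, γ * Real.log q / q * ∏ p ∈ P, (1 + γ / (p:ℝ)) :=
        Finset.sum_le_sum inner_bound
    _ = (∑ q ∈ P, γ * Real.log q / q) * ∏ p ∈ P, (1 + γ / (p:ℝ)) := by
        rw [Finset.sum_mul]

lemma good_sum_le (γ : ℝ) (hγ : 0 < γ) (P : Finset ℕ) (hP : ∀ p ∈ P, p.Prime) (K : ℕ) :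
    ∑ S ∈ P.powerset.filter (fun S => (∏ p ∈ S, p) ≤ K), ∏ p ∈ S, (γ / (p:ℝ))
      ≤ ∑ n ∈ Finset.Icc 1 K,
          (if Squarefree n then γ ^ n.primeFactors.card / (n:ℝ) else 0) := by
  classical
  set T := P.powerset.filter (fun S => (∏ p ∈ S, p) ≤ K) with hT
  have hTP : ∀ S ∈ T, ∀ p ∈ S, p.Prime := fun S hS p hp =>
    hP p (Finset.mem_powerset.mp (Finset.mem_of_mem_filter S hS) hp)
  have hinj : ∀ S ∈ T, ∀ S' ∈ T, (∏ p ∈ S, p) = (∏ p ∈ S', p) → S = S' := by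
    intro S hS S' hS' h
    rw [← Nat.primeFactors_prod (hTP S hS), ← Nat.primeFactors_prod (hTP S' hS'), h]
  have hfun : ∀ S ∈ T, (fun n : ℕ => if Squarefree n then γ ^ n.primeFactors.card / (n:ℝ) else 0)
      (∏ p ∈ S, p) = ∏ p ∈ S, (γ / (p:ℝ)) := by
    intro S hS
    simp only
    rw [if_pos (sqfree_prod_primes (hTP S hS)), Nat.primeFactors_prod (hTP S hS),
      prod_div_eq γ (Finset.mem_powerset.mp (Finset.mem_of_mem_filter S hS)) hP]
  calc ∑ S ∈ T, ∏ p ∈ S, (γ / (p:ℝ))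
      = ∑ n ∈ T.image (fun S => ∏ p ∈ S, p),
          (if Squarefree n then γ ^ n.primeFactors.card / (n:ℝ) else 0) := by
        rw [Finset.sum_image hinj]
        exact (Finset.sum_congr rfl hfun).symm
    _ ≤ ∑ n ∈ Finset.Icc 1 K,
          (if Squarefree n then γ ^ n.primeFactors.card / (n:ℝ) else 0) := by
        apply Finset.sum_le_sum_of_subset_of_nonneg
        · intro n hn
          rw [Finset.mem_image] at hn
          obtain ⟨S, hS, rfl⟩ := hn
          rw [Finset.mem_Icc]
          refine ⟨Finset.one_le_prod' fun p hp => (hTP S hS p hp).one_lt.le, ?_⟩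
          exact (Finset.mem_filter.mp hS).2
        · intro n _ _
          split_ifs
          · positivity
          · exact le_refl 0

lemma log_one_add_ge {x : ℝ} (hx : 0 ≤ x) : x - x^2 ≤ Real.log (1+x) := by
  have h1 : 0 < 1 + x := by linarith
  have hlog : Real.log ((1+x)⁻¹) ≤ (1+x)⁻¹ - 1 :=
    Real.log_le_sub_one_of_pos (by positivity)
  rw [Real.log_inv] at hlog
  have hmul : 1 ≤ (1 - x + x^2) * (1+x) := by nlinarith
  have hinv : (1+x)⁻¹ ≤ 1 - x + x^2 := by
    calc (1+x)⁻¹ = 1 * (1+x)⁻¹ := (one_mul _).symm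
      _ ≤ ((1 - x + x^2) * (1+x)) * (1+x)⁻¹ :=
          mul_le_mul_of_nonneg_right hmul (by positivity)
      _ = 1 - x + x^2 := by field_simp
  linarith

lemma prod_one_add_ge (γ : ℝ) (hγ : 0 < γ) (M : ℕ) :
    Real.exp (γ * (∑ p ∈ Nat.primesBelow M, (p:ℝ)⁻¹) - γ^2)
      ≤ ∏ p ∈ Nat.primesBelow M, (1 + γ / (p:ℝ)) := by
  have hpos : ∀ p ∈ Nat.primesBelow M, (0:ℝ) < 1 + γ / p := by
    intro p hp
    have : (0:ℝ) < p := by exact_mod_cast (Nat.prime_of_mem_primesBelow hp).pos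
    positivity
  rw [← Real.exp_log (Finset.prod_pos hpos), Real.exp_le_exp,
    Real.log_prod (fun p hp => (hpos p hp).ne')]
  have hterm : ∀ p ∈ Nat.primesBelow M,
      γ * (p:ℝ)⁻¹ - γ^2 * ((p:ℝ)⁻¹)^2 ≤ Real.log (1 + γ / p) := by
    intro p hp
    have hp0 : (0:ℝ) < p := by exact_mod_cast (Nat.prime_of_mem_primesBelow hp).pos
    have := log_one_add_ge (x := γ / p) (by positivity)
    have heq : γ / (p:ℝ) - (γ / p)^2 = γ * (p:ℝ)⁻¹ - γ^2 * ((p:ℝ)⁻¹)^2 := by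
      field_simp
    linarith [heq ▸ this]
  have hsum := Finset.sum_le_sum hterm
  rw [Finset.sum_sub_distrib, ← Finset.mul_sum, ← Finset.mul_sum] at hsum
  have hsq := sum_inv_sq_primesBelow M
  nlinarith [sq_nonneg γ]

theorem stmt_8 (γ : ℝ) (hγ : 0 < γ) :
    ∃ c > (0 : ℝ), ∃ z₀ : ℝ, ∀ z ≥ z₀,
      c * (Real.log z) ^ γ ≤
        ∑ n ∈ Finset.Icc 1 ⌊z⌋₊,
          (if Squarefree n then γ ^ n.primeFactors.card / (n : ℝ) else 0) := by
  classical
  set β := max γ 1 with hβ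
  have hβ1 : (1:ℝ) ≤ β := le_max_right γ 1
  have hγβ : γ ≤ β := le_max_left γ 1
  have hβ0 : (0:ℝ) < β := by linarith
  set e₀ := Real.exp (-(γ * Real.log (8*β)) - 2*γ - γ^2) with he₀
  refine ⟨(3/4) * e₀, by positivity, Real.exp (32 * β * (1+γ)), fun z hz => ?_⟩
  have hz0 : (0:ℝ) < z := lt_of_lt_of_le (Real.exp_pos _) hz
  have hL : 32 * β * (1+γ) ≤ Real.log z := by
    rw [← Real.log_exp (32 * β * (1+γ))]
    exact Real.log_le_log (Real.exp_pos _) hz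
  set L := Real.log z with hLdef
  have hL32 : (32:ℝ) ≤ L := by nlinarith
  have hLβ : 32*β ≤ L := by nlinarith
  have hLγ : 32*γ ≤ L := by nlinarith
  have hL0 : (0:ℝ) < L := by linarith
  have hz1 : (1:ℝ) ≤ z := by
    rcases le_or_gt 1 z with h | h
    · exact h
    · exfalso; have := Real.log_nonpos (by linarith) h.le; linarith
  -- the smoothness cutoff
  set y := z ^ ((8*β)⁻¹ : ℝ) with hy
  have hylog : Real.log y = (8*β)⁻¹ * L := by
    rw [hy, Real.log_rpow hz0]
  have hyexp : y = Real.exp ((8*β)⁻¹ * L) := by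
    rw [hy, Real.rpow_def_of_pos hz0]
    rw [hLdef]; ring_nf
  have h8β : (0:ℝ) < 8*β := by linarith
  have hLy4 : (4:ℝ) ≤ (8*β)⁻¹ * L := by
    have hinv : (0:ℝ) < (8*β)⁻¹ := by positivity
    have h1 : (8*β)⁻¹ * (32*β*(1+γ)) ≤ (8*β)⁻¹ * L :=
      mul_le_mul_of_nonneg_left hL hinv.le
    have h2 : (8*β)⁻¹ * (32*β*(1+γ)) = 4*(1+γ) := by field_simp; ring
    nlinarith
  have hy3 : (3:ℝ) ≤ y := by
    rw [hyexp]
    have := Real.add_one_le_exp ((8*β)⁻¹ * L)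
    linarith
  set N := ⌊y⌋₊ with hNdef
  have hy0 : (0:ℝ) ≤ y := by linarith
  have hN3 : 3 ≤ N := Nat.le_floor (by exact_mod_cast hy3)
  have hNy : (N:ℝ) ≤ y := Nat.floor_le hy0
  have hyN1 : y ≤ (N:ℝ) + 1 := (Nat.lt_floor_add_one y).le
  set P := Nat.primesBelow (N+1) with hPdef
  have hP : ∀ p ∈ P, p.Prime := fun p hp => Nat.prime_of_mem_primesBelow hp
  set F := ∏ p ∈ P, (1 + γ / (p:ℝ)) with hFdef
  have hFpos : 0 < F := Finset.prod_pos fun p hp => by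
    have : (0:ℝ) < p := by exact_mod_cast (hP p hp).pos
    positivity
  -- lower bound for F
  have hm2 := mertens2 N (by omega)
  have hlogN1 : (8*β)⁻¹ * L ≤ Real.log ((N:ℝ)+1) := by
    rw [← hylog]
    exact Real.log_le_log (by linarith) hyN1
  have hcastN1 : ((N+1 : ℕ) : ℝ) = (N:ℝ) + 1 := by push_cast; ring
  have hloglog : Real.log ((8*β)⁻¹ * L) ≤ Real.log (Real.log ((N:ℝ)+1)) :=
    Real.log_le_log (by positivity) hlogN1
  have hlogsplit : Real.log ((8*β)⁻¹ * L) = Real.log L - Real.log (8*β) := by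
    rw [Real.log_mul (by positivity) hL0.ne', Real.log_inv]
    ring
  have hFlow : Real.exp (γ * (Real.log L - Real.log (8*β) - 2) - γ^2) ≤ F := by
    refine le_trans ?_ (prod_one_add_ge γ hγ (N+1))
    rw [Real.exp_le_exp]
    have h1 : Real.log L - Real.log (8*β) - 2
        ≤ ∑ p ∈ Nat.primesBelow (N+1), (p:ℝ)⁻¹ := by
      linarith
    linarith [mul_le_mul_of_nonneg_left h1 hγ.le]
  -- upper bound for the log-weight sum
  have hm1 := mertens1 N (by omega)
  have hlogN : Real.log (N:ℝ) ≤ (8*β)⁻¹ * L := by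
    rw [← hylog]
    exact Real.log_le_log (by exact_mod_cast (by omega : 0 < N)) hNy
  have hweight : ∑ q ∈ P, γ * Real.log q / q ≤ L / 4 := by
    have heq : ∑ q ∈ P, γ * Real.log q / q = γ * ∑ q ∈ P, Real.log q / q := by
      rw [Finset.mul_sum]
      exact Finset.sum_congr rfl fun q _ => by ring
    rw [heq]
    have hlog4 : Real.log 4 ≤ 2 := by
      rw [show (4:ℝ) = 2^2 by norm_num, Real.log_pow]
      have := Real.log_two_lt_d9
      push_cast
      nlinarith
    have h1 : γ * ∑ q ∈ P, Real.log q / q ≤ γ * (Real.log N + Real.log 4) :=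
      mul_le_mul_of_nonneg_left hm1 hγ.le
    have h2 : γ * Real.log (N:ℝ) ≤ L / 8 := by
      have := mul_le_mul_of_nonneg_left hlogN hγ.le
      have hγL : γ * ((8*β)⁻¹ * L) ≤ L / 8 := by
        have e1 : γ * ((8*β)⁻¹ * L) = (γ/β) * (L/8) := by field_simp
        have hq1 : γ / β ≤ 1 := by
          rw [div_le_one hβ0]; exact hγβ
        rw [e1]
        calc (γ/β) * (L/8) ≤ 1 * (L/8) :=
              mul_le_mul_of_nonneg_right hq1 (by positivity)
          _ = L/8 := one_mul _
      linarith
    have h3 : γ * Real.log 4 ≤ L / 8 := by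
      have h4 := mul_le_mul_of_nonneg_left hlog4 hγ.le
      linarith
    linarith
  -- combine
  have hsplit := Finset.sum_filter_add_sum_filter_not P.powerset
    (fun S => (∏ p ∈ S, p) ≤ ⌊z⌋₊) (fun S => ∏ p ∈ S, (γ / (p:ℝ)))
  have heuler : ∑ S ∈ P.powerset, ∏ p ∈ S, (γ / (p:ℝ)) = F := euler_id γ P
  have htail := tail_bound γ hγ P hP z hz1 hL0
  have hbad : ∑ S ∈ P.powerset.filter (fun S => ¬ (∏ p ∈ S, p) ≤ ⌊z⌋₊),
      ∏ p ∈ S, (γ / (p:ℝ)) ≤ F / 4 := by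
    have h1 : (∑ S ∈ P.powerset.filter (fun S => ¬ (∏ p ∈ S, p) ≤ ⌊z⌋₊),
        ∏ p ∈ S, (γ / (p:ℝ))) * L ≤ (L/4) * F := by
      refine htail.trans ?_
      exact mul_le_mul_of_nonneg_right hweight hFpos.le
    rw [div_eq_mul_inv]
    calc ∑ S ∈ P.powerset.filter (fun S => ¬ (∏ p ∈ S, p) ≤ ⌊z⌋₊),
          ∏ p ∈ S, (γ / (p:ℝ))
        = (∑ S ∈ P.powerset.filter (fun S => ¬ (∏ p ∈ S, p) ≤ ⌊z⌋₊),
            ∏ p ∈ S, (γ / (p:ℝ))) * L * L⁻¹ := by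
          field_simp
      _ ≤ (L/4) * F * L⁻¹ := by
          apply mul_le_mul_of_nonneg_right h1 (by positivity)
      _ = F * 4⁻¹ := by field_simp
  have hgood : (3/4) * F ≤ ∑ S ∈ P.powerset.filter (fun S => (∏ p ∈ S, p) ≤ ⌊z⌋₊),
      ∏ p ∈ S, (γ / (p:ℝ)) := by
    have h5 := hsplit.trans heuler
    linarith
  have hmain := good_sum_le γ hγ P hP ⌊z⌋₊
  -- final chain
  have hrpow : L ^ γ = Real.exp (γ * Real.log L) := by
    rw [Real.rpow_def_of_pos hL0]
    ring_nf
  have hc : (3/4) * e₀ * L ^ γ ≤ (3/4) * F := by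
    have hee : e₀ * Real.exp (γ * Real.log L)
        = Real.exp (γ * (Real.log L - Real.log (8*β) - 2) - γ^2) := by
      rw [he₀, ← Real.exp_add]
      ring_nf
    calc (3/4) * e₀ * L ^ γ = (3/4) * (e₀ * Real.exp (γ * Real.log L)) := by
          rw [hrpow]; ring
      _ = (3/4) * Real.exp (γ * (Real.log L - Real.log (8*β) - 2) - γ^2) := by
          rw [hee]
      _ ≤ (3/4) * F := mul_le_mul_of_nonneg_left hFlow (by norm_num)
  calc (3/4) * e₀ * L ^ γ ≤ (3/4) * F := hc
    _ ≤ ∑ S ∈ P.powerset.filter (fun S => (∏ p ∈ S, p) ≤ ⌊z⌋₊),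
        ∏ p ∈ S, (γ / (p:ℝ)) := hgood
    _ ≤ _ := hmain
end

section
/- Let d ≥ 2. For every prime p > max(d, C_d) for a suitable constant C_d depending only on d, and every b₁, b₂, b₃ ∈ Z with p ∤ b₁b₂b₃, the congruence b₁x₁^d + b₂x₂^d + b₃x₃^d ≡ 0 (mod p) has a solution (x₁,x₂,x₃) not all divisible by p. -/
noncomputable def Complex.abs : AbsoluteValue ℂ ℝ :=
  IsAbsoluteValue.toAbsoluteValue (norm : ℂ → ℝ)

theorem Complex.norm_eq_abs (z : ℂ) : ‖z‖ = Complex.abs z := rfl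

theorem Complex.sq_abs (z : ℂ) : Complex.abs z ^ 2 = Complex.normSq z :=
  Complex.sq_norm z

theorem Complex.abs.nonneg (z : ℂ) : 0 ≤ Complex.abs z := norm_nonneg z

theorem Complex.abs_ofReal (x : ℝ) : Complex.abs (x : ℂ) = |x| := Complex.norm_real x

open Finset Complex

section AuxDiagonal

variable {p : ℕ} [Fact p.Prime] {d : ℕ}

noncomputable instance : Fintype (MulChar (ZMod p) ℂ) := Fintype.ofFinite _

variable (p d) in
noncomputable def Schar : Finset (MulChar (ZMod p) ℂ) :=
  Finset.univ.filter (fun χ => χ ^ d = 1)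

variable (p d) in
noncomputable def Ncnt (s : ZMod p) : ℕ :=
  (Finset.univ.filter (fun x : ZMod p => x ^ d = s)).card

lemma one_mem_Schar' (p d : ℕ) [Fact p.Prime] : (1 : MulChar (ZMod p) ℂ) ∈ Schar p d := by
  simp [Schar]

lemma card_Schar :
    (Schar p d).card = (Finset.univ.filter (fun u : (ZMod p)ˣ => u ^ d = 1)).card := by
  classical
  obtain ⟨e⟩ := MulChar.mulEquiv_units (ZMod p) ℂ
  refine Finset.card_bij' (fun χ _ => e χ) (fun u _ => e.symm u) ?_ ?_ ?_ ?_
  · intro χ hχ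
    simp only [Schar, mem_filter, mem_univ, true_and] at hχ ⊢
    rw [← map_pow, hχ, map_one]
  · intro u hu
    simp only [Schar, mem_filter, mem_univ, true_and] at hu ⊢
    rw [← map_pow, hu, map_one]
  · intro χ _; simp
  · intro u _; simp


lemma card_units_pow_le (hd : 0 < d) :
    (Finset.univ.filter (fun u : (ZMod p)ˣ => u ^ d = 1)).card ≤ d := by
  classical
  calc (Finset.univ.filter (fun u : (ZMod p)ˣ => u ^ d = 1)).card
      ≤ (Polynomial.nthRoots d (1 : ZMod p)).toFinset.card := by
        refine Finset.card_le_card_of_injOn (fun u => (u : ZMod p)) ?_ ?_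
        · intro u hu
          simp only [coe_filter, mem_filter, mem_univ, true_and, Set.mem_setOf_eq] at hu
          simp only [Finset.mem_coe, Multiset.mem_toFinset]
          rw [Polynomial.mem_nthRoots hd]
          rw [← Units.val_pow_eq_pow_val, hu, Units.val_one]
        · intro u _ v _ h
          exact Units.ext h
    _ ≤ Multiset.card (Polynomial.nthRoots d (1 : ZMod p)) := Multiset.toFinset_card_le _
    _ ≤ d := Polynomial.card_nthRoots d 1

lemma card_Schar_le (p : ℕ) [Fact p.Prime] {d : ℕ} (hd : 0 < d) : (Schar p d).card ≤ d :=
  (card_Schar (p := p) (d := d)).le.trans (card_units_pow_le hd)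

lemma card_pow_eq_pow' (hd : 0 < d) {t : ZMod p} (ht : t ≠ 0) :
    (Finset.univ.filter (fun x : ZMod p => x ^ d = t ^ d)).card
      = (Finset.univ.filter (fun u : (ZMod p)ˣ => u ^ d = 1)).card := by
  classical
  refine (Finset.card_bij (fun (u : (ZMod p)ˣ) _ => (u : ZMod p) * t) ?_ ?_ ?_).symm
  · intro u hu
    simp only [mem_filter, mem_univ, true_and] at hu ⊢
    rw [mul_pow, ← Units.val_pow_eq_pow_val, hu, Units.val_one, one_mul]
  · intro u _ v _ h
    have := mul_right_cancel₀ ht h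
    exact Units.ext this
  · intro x hx
    simp only [mem_filter, mem_univ, true_and] at hx
    have hx0 : x ≠ 0 := by
      intro h
      rw [h, zero_pow hd.ne'] at hx
      exact ht (pow_eq_zero_iff hd.ne' |>.mp hx.symm)
    refine ⟨Units.mk0 x hx0 * (Units.mk0 t ht)⁻¹, ?_, ?_⟩
    · simp only [mem_filter, mem_univ, true_and]
      rw [← Units.val_eq_one, Units.val_pow_eq_pow_val, Units.val_mul]
      push_cast [Units.val_mk0]
      rw [mul_pow, hx]
      simp [Units.val_inv_eq_inv_val, ← mul_pow, mul_inv_cancel₀ ht]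
      exact mul_inv_cancel₀ (pow_ne_zero d ht)
    · push_cast [Units.val_mul, Units.val_mk0]
      field_simp


lemma exists_char_nonresidue' (hd : 0 < d) {s : ZMod p} (hs : s ≠ 0)
    (hnr : ∀ t : ZMod p, t ^ d ≠ s) :
    ∃ χ : MulChar (ZMod p) ℂ, χ ^ d = 1 ∧ χ s ≠ 1 := by
  classical
  set m := Fintype.card (ZMod p)ˣ with hm
  obtain ⟨g, hg⟩ := IsCyclic.exists_generator (α := (ZMod p)ˣ)
  have hm0 : 0 < m := Fintype.card_pos
  set e := Nat.gcd d m with he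
  have he0 : 0 < e := Nat.gcd_pos_of_pos_left m hd
  set su := (isUnit_iff_ne_zero.mpr hs).unit with hsu
  obtain ⟨k, hk⟩ := Subgroup.mem_zpowers_iff.mp (hg su)
  have hgm : g ^ (m : ℤ) = 1 := by rw [zpow_natCast, hm, pow_card_eq_one]
  -- e does not divide k
  have hek : ¬ ((e : ℤ) ∣ k) := by
    rintro ⟨j, rfl⟩
    have hbez : (e : ℤ) = d * Nat.gcdA d m + m * Nat.gcdB d m := Nat.gcd_eq_gcd_ab d m
    have key : su = (g ^ (Nat.gcdA d m * j)) ^ (d : ℤ) := by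
      rw [← hk]
      calc g ^ ((e : ℤ) * j)
          = g ^ ((d : ℤ) * (Nat.gcdA d m * j)) * (g ^ (m : ℤ)) ^ (Nat.gcdB d m * j) := by
            rw [← zpow_mul, ← zpow_add]
            congr 1
            rw [hbez]; ring
        _ = (g ^ (Nat.gcdA d m * j)) ^ (d : ℤ) := by
            rw [hgm, one_zpow, mul_one, mul_comm, zpow_mul]
    apply hnr ((g ^ (Nat.gcdA d m * j) : (ZMod p)ˣ) : ZMod p)
    rw [← Units.val_pow_eq_pow_val, ← zpow_natCast _ d, ← key, hsu, IsUnit.unit_spec]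
  -- a character of order e
  have hep : e ∣ Fintype.card (ZMod p) - 1 := by
    rw [← Fintype.card_units (α := ZMod p)]
    exact Nat.gcd_dvd_right d m
  obtain ⟨χ, hχe⟩ := MulChar.exists_mulChar_orderOf (ZMod p) hep
    (Complex.isPrimitiveRoot_exp e he0.ne')
  refine ⟨χ, ?_, ?_⟩
  · exact orderOf_dvd_iff_pow_eq_one.mp (hχe ▸ Nat.gcd_dvd_left d m)
  · -- χ s ≠ 1
    have hχe1 : χ ^ e = 1 := hχe ▸ pow_orderOf_eq_one χ
    set φ := MulChar.equivToUnitHom χ with hφ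
    set w := φ g with hwdef
    have hcoe : ∀ v : (ZMod p)ˣ, ((φ v : ℂˣ) : ℂ) = χ (v : ZMod p) :=
      fun v => MulChar.coe_equivToUnitHom χ v
    have hwe : w ^ e = 1 := by
      apply Units.ext
      push_cast [hwdef, hcoe g]
      rw [← MulChar.pow_apply' χ he0.ne' (g : ZMod p), hχe1]
      exact MulChar.one_apply_coe g
    have hwpos : 0 < orderOf w :=
      (isOfFinOrder_iff_pow_eq_one.mpr ⟨e, he0, hwe⟩).orderOf_pos
    have heow : e ∣ orderOf w := by
      rw [← hχe]
      apply orderOf_dvd_of_pow_eq_one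
      rw [MulChar.eq_iff hg]
      rw [MulChar.pow_apply' χ hwpos.ne' (g : ZMod p), MulChar.one_apply_coe, ← hcoe g,
        ← Units.val_pow_eq_pow_val, ← hwdef, pow_orderOf_eq_one, Units.val_one]
    intro hcontra
    have h1 : χ s = ((φ (g ^ k) : ℂˣ) : ℂ) := by
      rw [hcoe (g ^ k), hk, hsu, IsUnit.unit_spec]
    have h2 : w ^ k = 1 := by
      rw [hwdef, ← map_zpow]
      apply Units.ext
      rw [Units.val_one, ← h1]
      exact hcontra
    have : ((orderOf w : ℕ) : ℤ) ∣ k := orderOf_dvd_iff_zpow_eq_one.mpr h2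
    exact hek (dvd_trans (Int.natCast_dvd_natCast.mpr heow) this)


lemma Ncnt_eq' (hd : 0 < d) (s : ZMod p) :
    (Ncnt p d s : ℂ) = (if s = 0 then 1 else 0) + ∑ χ ∈ Schar p d, χ s := by
  classical
  rcases eq_or_ne s 0 with rfl | hs
  · -- s = 0
    have h1 : Ncnt p d 0 = 1 := by
      rw [Ncnt]
      rw [show (Finset.univ.filter (fun x : ZMod p => x ^ d = 0)) = {0} by
        ext x
        simp [pow_eq_zero_iff hd.ne']]
      simp
    rw [h1]
    have h2 : ∀ χ ∈ Schar p d, χ (0 : ZMod p) = 0 := fun χ _ => χ.map_zero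
    rw [Finset.sum_congr rfl h2]
    simp
  · rw [if_neg hs]
    by_cases hres : ∃ t : ZMod p, t ^ d = s
    · obtain ⟨t, rfl⟩ := hres
      have ht : t ≠ 0 := by
        intro h
        rw [h, zero_pow hd.ne'] at hs
        exact hs rfl
      have hsum : ∀ χ ∈ Schar p d, χ (t ^ d) = 1 := by
        intro χ hχ
        simp only [Schar, mem_filter, mem_univ, true_and] at hχ
        rw [map_pow, ← MulChar.pow_apply' χ hd.ne', hχ]
        exact MulChar.one_apply (isUnit_iff_ne_zero.mpr ht)
      rw [Finset.sum_congr rfl hsum, Finset.sum_const, nsmul_eq_mul, mul_one]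
      rw [Ncnt, card_pow_eq_pow' hd ht, ← card_Schar (p := p) (d := d)]
      simp
    · push_neg at hres
      have h1 : Ncnt p d s = 0 := by
        rw [Ncnt, Finset.card_eq_zero]
        ext x
        simp only [mem_filter, mem_univ, true_and, notMem_empty, iff_false]
        exact hres x
      obtain ⟨χ₀, hχ₀d, hχ₀s⟩ := exists_char_nonresidue' hd hs hres
      have key : χ₀ s * ∑ χ ∈ Schar p d, χ s = ∑ χ ∈ Schar p d, χ s := by
        rw [Finset.mul_sum]
        refine Finset.sum_nbij' (fun χ => χ₀ * χ) (fun χ => χ₀⁻¹ * χ) ?_ ?_ ?_ ?_ ?_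
        · intro χ hχ
          simp only [Schar, mem_filter, mem_univ, true_and] at hχ ⊢
          rw [mul_pow, hχ, hχ₀d, mul_one]
        · intro χ hχ
          simp only [Schar, mem_filter, mem_univ, true_and] at hχ ⊢
          rw [mul_pow, hχ, inv_pow, hχ₀d, inv_one, mul_one]
        · intro χ _; simp only [← mul_assoc, inv_mul_cancel, one_mul]
        · intro χ _; simp only [← mul_assoc, mul_inv_cancel, one_mul]
        · intro χ _
          rw [MulChar.mul_apply]
      rw [h1]
      have key2 : (χ₀ s - 1) * ∑ χ ∈ Schar p d, χ s = 0 := by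
        rw [sub_mul, one_mul, key, sub_self]
      rcases mul_eq_zero.mp key2 with h | h
      · exact absurd (sub_eq_zero.mp h) hχ₀s
      · rw [h, Nat.cast_zero, add_zero]


lemma abs_char_val' (χ : MulChar (ZMod p) ℂ) {u : ZMod p} (hu : u ≠ 0) :
    Complex.abs (χ u) = 1 := by
  have h := MulChar.apply_mem_rootsOfUnity (isUnit_iff_ne_zero.mpr hu).unit (χ := χ)
  have := Complex.norm_eq_one_of_mem_rootsOfUnity h
  rwa [MulChar.coe_equivToUnitHom, IsUnit.unit_spec, Complex.norm_eq_abs] at this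

-- |J(χ,λ)| ≤ √p for all three nontrivial
lemma abs_jacobiSum_le' {χ lam : MulChar (ZMod p) ℂ} (hχ : χ ≠ 1) (hl : lam ≠ 1)
    (hχl : χ * lam ≠ 1) :
    Complex.abs (jacobiSum χ lam) ≤ Real.sqrt p := by
  have hchar : ringChar ℂ ≠ ringChar (ZMod p) := by
    rw [ringChar.eq_zero, ZMod.ringChar_zmod_n]
    exact fun h => (Fact.out : p.Prime).ne_zero h.symm
  have hJ := jacobiSum_mul_jacobiSum_inv hchar hχ hl hχl
  have hstar : (starRingEnd ℂ) (jacobiSum χ lam) = jacobiSum χ⁻¹ lam⁻¹ := by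
    rw [jacobiSum, jacobiSum, map_sum]
    refine Finset.sum_congr rfl fun x _ => ?_
    rw [map_mul]
    rw [← MulChar.star_apply', ← MulChar.star_apply']
    rfl
  have habs2 : (Complex.abs (jacobiSum χ lam)) ^ 2 = (p : ℝ) := by
    have h1 : jacobiSum χ lam * (starRingEnd ℂ) (jacobiSum χ lam) = (p : ℂ) := by
      rw [hstar, hJ, ZMod.card]
    rw [Complex.mul_conj] at h1
    have h2 : (Complex.normSq (jacobiSum χ lam) : ℝ) = (p : ℝ) := by
      exact_mod_cast congrArg Complex.re h1
    rw [Complex.sq_abs]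
    exact h2
  rw [← Real.sqrt_sq (Complex.abs.nonneg _), habs2]


-- Step A
lemma step_A' (hd : 0 < d) {a b c : ZMod p} (ha : a ≠ 0) (hb : b ≠ 0) :
    (Finset.univ.filter (fun xy : ZMod p × ZMod p =>
        a * xy.1 ^ d + b * xy.2 ^ d + c = 0)).card
      = ∑ s : ZMod p, Ncnt p d (s / a) * Ncnt p d ((-c - s) / b) := by
  classical
  have key : ∀ x y : ZMod p,
      (∑ s : ZMod p, (if x ^ d = s / a then (1:ℕ) else 0)
        * (if y ^ d = (-c - s) / b then 1 else 0))
      = if a * x ^ d + b * y ^ d + c = 0 then 1 else 0 := by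
    intro x y
    rw [Finset.sum_eq_single (a * x ^ d)]
    · rw [if_pos (by field_simp), one_mul]
      refine if_congr ?_ rfl rfl
      rw [eq_div_iff hb]
      constructor
      · intro h; linear_combination h
      · intro h; linear_combination h
    · intro s _ hne
      rw [if_neg, zero_mul]
      intro h
      apply hne
      rw [eq_div_iff ha] at h
      linear_combination -h
    · intro h
      exact absurd (Finset.mem_univ _) h
  calc (Finset.univ.filter (fun xy : ZMod p × ZMod p =>
        a * xy.1 ^ d + b * xy.2 ^ d + c = 0)).card
      = ∑ xy : ZMod p × ZMod p, if a * xy.1 ^ d + b * xy.2 ^ d + c = 0 then 1 else 0 :=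
        Finset.card_filter _ _
    _ = ∑ x : ZMod p, ∑ y : ZMod p, if a * x ^ d + b * y ^ d + c = 0 then 1 else 0 :=
        Fintype.sum_prod_type _
    _ = ∑ x : ZMod p, ∑ y : ZMod p, ∑ s : ZMod p,
          (if x ^ d = s / a then 1 else 0) * (if y ^ d = (-c - s) / b then 1 else 0) := by
        refine Finset.sum_congr rfl fun x _ => Finset.sum_congr rfl fun y _ => (key x y).symm
    _ = ∑ x : ZMod p, ∑ s : ZMod p, ∑ y : ZMod p,
          (if x ^ d = s / a then 1 else 0) * (if y ^ d = (-c - s) / b then 1 else 0) :=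
        Finset.sum_congr rfl fun x _ => Finset.sum_comm
    _ = ∑ s : ZMod p, ∑ x : ZMod p, ∑ y : ZMod p,
          (if x ^ d = s / a then 1 else 0) * (if y ^ d = (-c - s) / b then 1 else 0) :=
        Finset.sum_comm
    _ = ∑ s : ZMod p,
          (Finset.univ.filter (fun x : ZMod p => x ^ d = s / a)).card
            * (Finset.univ.filter (fun y : ZMod p => y ^ d = (-c - s) / b)).card := by
        refine Finset.sum_congr rfl fun s _ => ?_
        rw [Finset.card_filter, Finset.card_filter, Finset.sum_mul_sum]
    _ = ∑ s : ZMod p, Ncnt p d (s / a) * Ncnt p d ((-c - s) / b) := rfl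

-- Step C
lemma step_C' {a b c : ZMod p} (ha : a ≠ 0) (hb : b ≠ 0) (hc : c ≠ 0)
    (χ lam : MulChar (ZMod p) ℂ) :
    ∑ s : ZMod p, χ (s / a) * lam ((-c - s) / b)
      = χ (-c / a) * lam (-c / b) * jacobiSum χ lam := by
  have hnc : (-c : ZMod p) ≠ 0 := neg_ne_zero.mpr hc
  have := Equiv.sum_comp (Equiv.mulLeft₀ (-c) hnc)
    (fun s => χ (s / a) * lam ((-c - s) / b))
  rw [← this]
  rw [jacobiSum, Finset.mul_sum]
  refine Finset.sum_congr rfl fun x _ => ?_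
  simp only [Equiv.mulLeft₀_apply]
  have h1 : (-c * x) / a = (-c / a) * x := by ring
  have h2 : (-c - (-c * x)) / b = (-c / b) * (1 - x) := by ring
  rw [h1, h2, map_mul, map_mul]
  ring


lemma exists_sol (hd2 : 2 ≤ d) (hp : ((d ^ 2 + 2 * d + 2) ^ 2 : ℕ) < p)
    {a b c : ZMod p} (ha : a ≠ 0) (hb : b ≠ 0) (hc : c ≠ 0) :
    ∃ x y : ZMod p, a * x ^ d + b * y ^ d + c = 0 := by
  classical
  have hd : 0 < d := lt_of_lt_of_le two_pos hd2
  have hp2 : 2 ≤ p := (Fact.out : p.Prime).two_le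
  by_contra hno
  push_neg at hno
  set M := (Finset.univ.filter (fun xy : ZMod p × ZMod p =>
      a * xy.1 ^ d + b * xy.2 ^ d + c = 0)).card with hMdef
  have hM0 : M = 0 := by
    rw [hMdef, Finset.card_eq_zero, Finset.filter_eq_empty_iff]
    intro xy _
    exact hno xy.1 xy.2
  have hnc : (-c : ZMod p) ≠ 0 := neg_ne_zero.mpr hc
  have hnca : (-c / a : ZMod p) ≠ 0 := div_ne_zero hnc ha
  have hncb : (-c / b : ZMod p) ≠ 0 := div_ne_zero hnc hb
  set S := Schar p d with hSdef
  set g1 : ZMod p → ℂ := fun s => ∑ χ ∈ S, χ (s / a) with hg1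
  set g2 : ZMod p → ℂ := fun s => ∑ χ ∈ S, χ ((-c - s) / b) with hg2
  have e1 : ∀ s : ZMod p, (Ncnt p d (s / a) : ℂ) = (if s = 0 then 1 else 0) + g1 s := by
    intro s
    rw [Ncnt_eq' hd]
    congr 1
    refine if_congr ?_ rfl rfl
    rw [div_eq_zero_iff]
    simp [ha]
  have e2 : ∀ s : ZMod p, (Ncnt p d ((-c - s) / b) : ℂ)
      = (if s = -c then 1 else 0) + g2 s := by
    intro s
    rw [Ncnt_eq' hd]
    congr 1
    refine if_congr ?_ rfl rfl
    rw [div_eq_zero_iff]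
    constructor
    · rintro (h | h)
      · linear_combination -h
      · exact absurd h hb
    · intro h; left; rw [h]; ring
  -- the main identity
  have hMc : (M : ℂ) = ∑ s : ZMod p,
      ((if s = 0 then 1 else 0) + g1 s) * ((if s = -c then 1 else 0) + g2 s) := by
    rw [hMdef, step_A' hd ha hb]
    push_cast
    refine Finset.sum_congr rfl fun s _ => ?_
    rw [e1 s, e2 s]
  have expand : (M : ℂ)
      = (∑ s : ZMod p, (if s = 0 then (1:ℂ) else 0) * (if s = -c then 1 else 0))
      + (∑ s : ZMod p, (if s = 0 then (1:ℂ) else 0) * g2 s)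
      + (∑ s : ZMod p, g1 s * (if s = -c then (1:ℂ) else 0))
      + (∑ s : ZMod p, g1 s * g2 s) := by
    rw [hMc, ← Finset.sum_add_distrib, ← Finset.sum_add_distrib, ← Finset.sum_add_distrib]
    refine Finset.sum_congr rfl fun s _ => ?_
    ring
  have T0 : (∑ s : ZMod p, (if s = 0 then (1:ℂ) else 0) * (if s = -c then 1 else 0)) = 0 := by
    refine Finset.sum_eq_zero fun s _ => ?_
    rcases eq_or_ne s 0 with rfl | h
    · rw [if_neg (show ¬(0 : ZMod p) = -c from fun h => hc (neg_eq_zero.mp h.symm)), mul_zero]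
    · rw [if_neg h, zero_mul]
  have T1 : (∑ s : ZMod p, (if s = 0 then (1:ℂ) else 0) * g2 s) = g2 0 := by
    rw [Finset.sum_congr rfl (fun s _ => ite_zero_mul (s = 0) (1:ℂ) (g2 s))]
    simp
  have T2 : (∑ s : ZMod p, g1 s * (if s = -c then (1:ℂ) else 0)) = g1 (-c) := by
    rw [Finset.sum_congr rfl (fun s _ => mul_ite_zero (s = -c) (g1 s) (1:ℂ))]
    simp
  have T3 : (∑ s : ZMod p, g1 s * g2 s)
      = ∑ q ∈ S ×ˢ S, q.1 (-c / a) * q.2 (-c / b) * jacobiSum q.1 q.2 := by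
    calc ∑ s : ZMod p, g1 s * g2 s
        = ∑ s : ZMod p, ∑ χ ∈ S, ∑ lam ∈ S, χ (s / a) * lam ((-c - s) / b) := by
          refine Finset.sum_congr rfl fun s _ => ?_
          rw [hg1, hg2]
          rw [Finset.sum_mul_sum]
      _ = ∑ χ ∈ S, ∑ s : ZMod p, ∑ lam ∈ S, χ (s / a) * lam ((-c - s) / b) :=
          Finset.sum_comm
      _ = ∑ χ ∈ S, ∑ lam ∈ S, ∑ s : ZMod p, χ (s / a) * lam ((-c - s) / b) :=
          Finset.sum_congr rfl fun χ _ => Finset.sum_comm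
      _ = ∑ χ ∈ S, ∑ lam ∈ S, χ (-c / a) * lam (-c / b) * jacobiSum χ lam :=
          Finset.sum_congr rfl fun χ _ => Finset.sum_congr rfl fun lam _ =>
            step_C' ha hb hc χ lam
      _ = ∑ q ∈ S ×ˢ S, q.1 (-c / a) * q.2 (-c / b) * jacobiSum q.1 q.2 :=
          (Finset.sum_product' (s := S) (t := S)
            (f := fun χ lam => χ (-c / a) * lam (-c / b) * jacobiSum χ lam)).symm
  -- split off the (1,1) term
  have h11mem : ((1, 1) : MulChar (ZMod p) ℂ × MulChar (ZMod p) ℂ) ∈ S ×ˢ S :=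
    Finset.mem_product.mpr ⟨one_mem_Schar' p d, one_mem_Schar' p d⟩
  set W := ∑ q ∈ (S ×ˢ S).erase (1, 1),
      q.1 (-c / a) * q.2 (-c / b) * jacobiSum q.1 q.2 with hW
  have hsplit : (∑ q ∈ S ×ˢ S, q.1 (-c / a) * q.2 (-c / b) * jacobiSum q.1 q.2)
      = ((p : ℂ) - 2) + W := by
    rw [← Finset.add_sum_erase _ _ h11mem]
    congr 1
    show (1 : MulChar (ZMod p) ℂ) (-c / a) * (1 : MulChar (ZMod p) ℂ) (-c / b)
        * jacobiSum (1 : MulChar (ZMod p) ℂ) 1 = (p : ℂ) - 2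
    rw [MulChar.one_apply (isUnit_iff_ne_zero.mpr hnca),
      MulChar.one_apply (isUnit_iff_ne_zero.mpr hncb), jacobiSum_one_one, one_mul, one_mul,
      ZMod.card]
  -- the equation
  have Eq1 : (M : ℂ) = ((p : ℂ) - 2) + (g2 0 + g1 (-c) + W) := by
    rw [expand, T0, T1, T2, T3, hsplit]
    ring
  -- bounds
  have hcard : (S.card : ℝ) ≤ (d : ℝ) := Nat.cast_le.mpr (card_Schar_le p hd)
  have hg2bound : Complex.abs (g2 0) ≤ (d : ℝ) := by
    refine le_trans (AbsoluteValue.sum_le _ _ _) ?_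
    calc ∑ χ ∈ S, Complex.abs (χ ((-c - 0) / b))
        ≤ ∑ _χ ∈ S, (1 : ℝ) := by
          refine Finset.sum_le_sum fun χ _ => ?_
          rw [abs_char_val' χ (by rw [sub_zero]; exact hncb)]
      _ = S.card := by simp
      _ ≤ (d : ℝ) := hcard
  have hg1bound : Complex.abs (g1 (-c)) ≤ (d : ℝ) := by
    refine le_trans (AbsoluteValue.sum_le _ _ _) ?_
    calc ∑ χ ∈ S, Complex.abs (χ (-c / a))
        ≤ ∑ _χ ∈ S, (1 : ℝ) := by
          refine Finset.sum_le_sum fun χ _ => ?_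
          rw [abs_char_val' χ hnca]
      _ = S.card := by simp
      _ ≤ (d : ℝ) := hcard
  have hsqrt1 : (1 : ℝ) ≤ Real.sqrt p := by
    rw [show (1:ℝ) = Real.sqrt 1 by simp]
    exact Real.sqrt_le_sqrt (by exact_mod_cast Nat.one_le_of_lt hp2)
  have hWbound : Complex.abs W ≤ (d : ℝ) ^ 2 * Real.sqrt p := by
    refine le_trans (AbsoluteValue.sum_le _ _ _) ?_
    have hterm : ∀ q ∈ (S ×ˢ S).erase (1, 1),
        Complex.abs (q.1 (-c / a) * q.2 (-c / b) * jacobiSum q.1 q.2) ≤ Real.sqrt p := by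
      rintro ⟨χ, lam⟩ hq
      obtain ⟨hne, hmem⟩ := Finset.mem_erase.mp hq
      have habsJ : Complex.abs (jacobiSum χ lam) ≤ Real.sqrt p := by
        by_cases hχ1 : χ = 1
        · have hl1 : lam ≠ 1 := by
            intro h; exact hne (by rw [hχ1, h])
          rw [hχ1, jacobiSum_one_nontrivial hl1]
          simpa using hsqrt1
        · by_cases hl1 : lam = 1
          · rw [hl1, jacobiSum_comm, jacobiSum_one_nontrivial hχ1]
            simpa using hsqrt1
          · by_cases hprod : χ * lam = 1
            · have : lam = χ⁻¹ := by
                rw [eq_inv_iff_mul_eq_one]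
                rwa [mul_comm]
              rw [this, jacobiSum_nontrivial_inv hχ1]
              rw [map_neg_eq_map]
              rw [abs_char_val' χ (by
                intro h
                rw [neg_eq_zero] at h
                exact one_ne_zero h)]
              exact hsqrt1
            · exact abs_jacobiSum_le' hχ1 hl1 hprod
      calc Complex.abs (χ (-c / a) * lam (-c / b) * jacobiSum χ lam)
          = Complex.abs (χ (-c / a)) * Complex.abs (lam (-c / b))
              * Complex.abs (jacobiSum χ lam) := by rw [map_mul, map_mul]
        _ = Complex.abs (jacobiSum χ lam) := by
            rw [abs_char_val' χ hnca, abs_char_val' lam hncb, one_mul, one_mul]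
        _ ≤ Real.sqrt p := habsJ
    calc ∑ q ∈ (S ×ˢ S).erase (1, 1),
          Complex.abs (q.1 (-c / a) * q.2 (-c / b) * jacobiSum q.1 q.2)
        ≤ ∑ _q ∈ (S ×ˢ S).erase (1, 1), Real.sqrt p := Finset.sum_le_sum hterm
      _ = ((S ×ˢ S).erase (1, 1)).card * Real.sqrt p := by rw [Finset.sum_const, nsmul_eq_mul]
      _ ≤ (d : ℝ) ^ 2 * Real.sqrt p := by
          refine mul_le_mul_of_nonneg_right ?_ (Real.sqrt_nonneg _)
          calc (((S ×ˢ S).erase (1, 1)).card : ℝ) ≤ ((S ×ˢ S).card : ℝ) :=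
                Nat.cast_le.mpr (Finset.card_le_card (Finset.erase_subset _ _))
            _ = (S.card : ℝ) * S.card := by rw [Finset.card_product]; push_cast; ring
            _ ≤ (d : ℝ) ^ 2 := by nlinarith [hcard, Nat.cast_nonneg (α := ℝ) S.card]
  -- final contradiction
  have habsM : Complex.abs ((M : ℂ) - ((p : ℂ) - 2)) = (p : ℝ) - 2 := by
    rw [hM0]
    push_cast
    rw [zero_sub, map_neg_eq_map]
    rw [show ((p : ℂ) - 2) = (((p : ℝ) - 2 : ℝ) : ℂ) by push_cast; ring]
    rw [Complex.abs_ofReal, _root_.abs_of_nonneg (by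
      have : (2 : ℝ) ≤ (p : ℝ) := by exact_mod_cast hp2
      linarith)]
  have htotal : (p : ℝ) - 2 ≤ (d : ℝ) + (d : ℝ) + (d : ℝ) ^ 2 * Real.sqrt p := by
    rw [← habsM]
    have : (M : ℂ) - ((p : ℂ) - 2) = g2 0 + g1 (-c) + W := by rw [Eq1]; ring
    rw [this]
    calc Complex.abs (g2 0 + g1 (-c) + W)
        ≤ Complex.abs (g2 0 + g1 (-c)) + Complex.abs W := AbsoluteValue.add_le _ _ _
      _ ≤ Complex.abs (g2 0) + Complex.abs (g1 (-c)) + Complex.abs W := by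
          have := AbsoluteValue.add_le Complex.abs (g2 0) (g1 (-c))
          linarith
      _ ≤ (d : ℝ) + (d : ℝ) + (d : ℝ) ^ 2 * Real.sqrt p := by
          linarith [hg2bound, hg1bound, hWbound]
  -- numeric contradiction
  have hsq : Real.sqrt p ^ 2 = (p : ℝ) := Real.sq_sqrt (Nat.cast_nonneg p)
  have hsgt : ((d : ℝ) ^ 2 + 2 * d + 2) < Real.sqrt p := by
    rw [show ((d:ℝ)^2 + 2*d + 2) = ((d^2 + 2*d + 2 : ℕ) : ℝ) by push_cast; ring]
    refine (Real.lt_sqrt (Nat.cast_nonneg _)).mpr ?_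
    rw [show (((d^2 + 2*d + 2 : ℕ) : ℝ))^2 = (((d^2+2*d+2)^2 : ℕ) : ℝ) by push_cast; ring]
    exact_mod_cast hp
  have hd1 : (1 : ℝ) ≤ (d : ℝ) := by exact_mod_cast hd
  nlinarith [hsq, hsgt, htotal, hsqrt1, Real.sqrt_nonneg (p : ℝ)]

end AuxDiagonal

theorem stmt_11 (d : ℕ) (hd : 2 ≤ d) :
    ∃ C : ℕ, ∀ p : ℕ, p.Prime → max d C < p →
      ∀ b₁ b₂ b₃ : ℤ, ¬ (p : ℤ) ∣ b₁ * b₂ * b₃ →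
        ∃ x₁ x₂ x₃ : ℤ, ¬ ((p : ℤ) ∣ x₁ ∧ (p : ℤ) ∣ x₂ ∧ (p : ℤ) ∣ x₃) ∧
          (p : ℤ) ∣ b₁ * x₁ ^ d + b₂ * x₂ ^ d + b₃ * x₃ ^ d := by
  refine ⟨(d ^ 2 + 2 * d + 2) ^ 2, fun p hp hmax b₁ b₂ b₃ hb => ?_⟩
  haveI : Fact p.Prime := ⟨hp⟩
  have hC : ((d ^ 2 + 2 * d + 2) ^ 2 : ℕ) < p := lt_of_le_of_lt (le_max_right d _) hmax
  have h1 : ¬ (p : ℤ) ∣ b₁ := fun h => hb ((h.mul_right b₂).mul_right b₃)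
  have h2 : ¬ (p : ℤ) ∣ b₂ := fun h => hb ((h.mul_left b₁).mul_right b₃)
  have h3 : ¬ (p : ℤ) ∣ b₃ := fun h => hb (h.mul_left (b₁ * b₂))
  have ha : ((b₁ : ZMod p)) ≠ 0 := fun h => h1 ((ZMod.intCast_zmod_eq_zero_iff_dvd b₁ p).mp h)
  have hbz : ((b₂ : ZMod p)) ≠ 0 := fun h => h2 ((ZMod.intCast_zmod_eq_zero_iff_dvd b₂ p).mp h)
  have hcz : ((b₃ : ZMod p)) ≠ 0 := fun h => h3 ((ZMod.intCast_zmod_eq_zero_iff_dvd b₃ p).mp h)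
  obtain ⟨x, y, hxy⟩ := exists_sol hd hC ha hbz hcz
  refine ⟨(x.val : ℤ), (y.val : ℤ), 1, ?_, ?_⟩
  · rintro ⟨-, -, h3'⟩
    have := Int.le_of_dvd one_pos h3'
    have h2p : (2 : ℤ) ≤ (p : ℤ) := by exact_mod_cast hp.two_le
    linarith
  · rw [← ZMod.intCast_zmod_eq_zero_iff_dvd]
    have hx : (((x.val : ℤ) : ZMod p)) = x := by
      push_cast
      simp [ZMod.natCast_val, ZMod.cast_id]
    have hy : (((y.val : ℤ) : ZMod p)) = y := by
      push_cast
      simp [ZMod.natCast_val, ZMod.cast_id]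
    push_cast
    rw [show ((x.val : ℕ) : ZMod p) = x by exact_mod_cast hx,
      show ((y.val : ℕ) : ZMod p) = y by exact_mod_cast hy, one_pow, mul_one]
    exact hxy
end
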